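/- Let M be a finite metric space with n points, G a minimum spanning tree on M with edges ordered by non-increasing length e₁,…,e_{n-1}, and let D' be any partition of M into k+1 nonempty parts (1 ≤ k ≤ n-1). Then α(D') ≤ |eₖ|, where α(D') is the minimum distance between distinct parts of D'. -/

import Mathlib

open scoped Classical

/-- The length of a graph on a finite metric space: the sum of the distances between the
endpoints of its edges. -/
noncomputable def graphLength {M : Type*} [MetricSpace M] [Fintype M] (G : SimpleGraph M) : ℝ :=
  ∑ e ∈ G.edgeSet.toFinite.toFinset,
    Sym2.lift ⟨fun x y => dist x y, fun x y => dist_comm x y⟩ e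

/-- The length of an edge: the distance between its endpoints. -/
noncomputable def edgeLen {M : Type*} [MetricSpace M] (e : Sym2 M) : ℝ :=
  Sym2.lift ⟨fun x y => dist x y, fun x y => dist_comm x y⟩ e

/-- The length of the `i`-th edge in a list of edges (1-indexed), with the convention that the
`0`-th edge has length `0`. -/
noncomputable def edgeLenAt {M : Type*} [MetricSpace M] (E : List (Sym2 M)) : ℕ → ℝ
  | 0 => 0
  | i + 1 => (E.map edgeLen).getD i 0

/-- `P` is a partition of `X` into `m` nonempty parts. -/
def IsPartition {X : Type*} {m : ℕ} (P : Fin m → Set X) : Prop :=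
  (∀ i, (P i).Nonempty) ∧ (Pairwise fun i j => Disjoint (P i) (P j)) ∧
    (⋃ i, P i) = Set.univ

/-- `diam D`: the maximum of the diameters of the parts. -/
noncomputable def diamD {X : Type*} [MetricSpace X] {m : ℕ} (P : Fin m → Set X) : ℝ :=
  ⨆ i, Metric.diam (P i)

/-- `α(D)`: the minimum over pairs of distinct parts of the infimum distance between them. -/
noncomputable def alphaD {X : Type*} [MetricSpace X] {m : ℕ} (P : Fin m → Set X) : ℝ :=
  sInf {r : ℝ | ∃ i j, i ≠ j ∧ ∃ x ∈ P i, ∃ y ∈ P j, r = dist x y}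

/-- `β(D)`: the maximum over pairs of distinct parts of the supremum distance between them. -/
noncomputable def betaD {X : Type*} [MetricSpace X] {m : ℕ} (P : Fin m → Set X) : ℝ :=
  sSup {r : ℝ | ∃ i j, i ≠ j ∧ ∃ x ∈ P i, ∃ y ∈ P j, r = dist x y}

lemma edgeLenAt_pos_eq {M : Type*} [MetricSpace M] (E : List (Sym2 M)) {k : ℕ} (h : 1 ≤ k) :
    edgeLenAt E k = (E.map edgeLen).getD (k - 1) 0 := by
  cases k with
  | zero => omega
  | succ k' => rfl

theorem stmt_16 {M : Type*} [MetricSpace M] [Fintype M] (hn : 2 ≤ Fintype.card M)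
    (G : SimpleGraph M) (hG : G.IsTree)
    (hmin : ∀ T : SimpleGraph M, T.IsTree → graphLength G ≤ graphLength T)
    (E : List (Sym2 M)) (hE : ∀ e, e ∈ E ↔ e ∈ G.edgeSet) (hnd : E.Nodup)
    (hsorted : (E.map edgeLen).Pairwise (· ≥ ·))
    {k : ℕ} (hk1 : 1 ≤ k) (hk2 : k ≤ E.length)
    (P : Fin (k + 1) → Set M) (hP : IsPartition P) :
    alphaD P ≤ edgeLenAt E k := by
  classical
  obtain ⟨hne, hdisj, hcover⟩ := hP
  have hex : ∀ x : M, ∃ i, x ∈ P i := by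
    intro x
    have : x ∈ ⋃ i, P i := hcover ▸ Set.mem_univ x
    simpa using this
  choose c hc using hex
  have hcu : ∀ {x : M} {i}, x ∈ P i → c x = i := by
    intro x i hx
    by_contra hcx
    exact Set.disjoint_left.mp (hdisj hcx) (hc x) hx
  have hMne : Nonempty M := Fintype.card_pos_iff.mp (by omega)
  obtain ⟨r⟩ := hMne
  have hconn : G.Connected := hG.isConnected
  set d : M → ℕ := fun v => G.dist r v with hd
  -- every vertex other than the root has a neighbour strictly closer to the root
  have hstep : ∀ v : M, v ≠ r → ∃ u, G.Adj u v ∧ d u < d v := by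
    intro v hv
    obtain ⟨p, hp⟩ := hconn.exists_walk_length_eq_dist r v
    have hdv : 1 ≤ d v := hconn.pos_dist_of_ne (fun h => hv h.symm)
    cases hq : p.reverse with
    | nil => exact absurd rfl hv
    | cons h q =>
      rename_i u
      refine ⟨u, h.symm, ?_⟩
      have h1 : G.dist r u ≤ q.reverse.length := SimpleGraph.dist_le _
      have h2 : q.reverse.length = q.length := SimpleGraph.Walk.length_reverse _
      have h3 : p.reverse.length = p.length := SimpleGraph.Walk.length_reverse _
      have h4 : p.reverse.length = q.length + 1 := by rw [hq]; simp
      simp only [hd]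
      omega
  -- minimal-depth vertex of each part
  have hmin' : ∀ i, ∃ v ∈ P i, ∀ w ∈ P i, d v ≤ d w := fun i =>
    Set.exists_min_image (P i) d (Set.toFinite _) (hne i)
  choose v hv hvmin using hmin'
  have hvr : ∀ i, i ≠ c r → v i ≠ r := by
    intro i hi hir
    exact hi ((hcu (hir ▸ hv i)).symm)
  have hu' : ∀ i, ∃ u, i ≠ c r → G.Adj u (v i) ∧ d u < d (v i) := by
    intro i
    by_cases hi : i = c r
    · exact ⟨r, fun h => absurd hi h⟩
    · obtain ⟨u, hu1, hu2⟩ := hstep (v i) (hvr i hi)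
      exact ⟨u, fun _ => ⟨hu1, hu2⟩⟩
  choose u hu using hu'
  set ed : Fin (k + 1) → Sym2 M := fun i => s(v i, u i) with hed
  have hcui : ∀ i, i ≠ c r → c (u i) ≠ i := by
    intro i hi hci
    have hui : u i ∈ P i := by have := hc (u i); rwa [hci] at this
    exact absurd (hvmin i (u i) hui) (by have := (hu i hi).2; omega)
  -- each such edge is in E
  have hmemE : ∀ i, i ≠ c r → ed i ∈ E := by
    intro i hi
    exact (hE _).2 (G.mem_edgeSet.mpr ((hu i hi).1.symm))
  -- alpha bound
  have halpha : ∀ i, i ≠ c r → alphaD P ≤ edgeLen (ed i) := by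
    intro i hi
    have hmem : dist (v i) (u i) ∈
        {r : ℝ | ∃ a b, a ≠ b ∧ ∃ x ∈ P a, ∃ y ∈ P b, r = dist x y} :=
      ⟨i, c (u i), fun h => hcui i hi h.symm, v i, hv i, u i, hc (u i), rfl⟩
    have hbdd : BddBelow {r : ℝ | ∃ a b, a ≠ b ∧ ∃ x ∈ P a, ∃ y ∈ P b, r = dist x y} := by
      refine ⟨0, fun s hs => ?_⟩
      obtain ⟨_, _, _, _, _, _, _, rfl⟩ := hs
      exact dist_nonneg
    have : edgeLen (ed i) = dist (v i) (u i) := rfl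
    rw [this]
    exact csInf_le hbdd hmem
  -- injectivity
  set A : Finset (Fin (k + 1)) := Finset.univ.erase (c r) with hA
  have hAcard : A.card = k := by simp [hA]
  have hedinj : ∀ i ∈ A, ∀ j ∈ A, ed i = ed j → i = j := by
    intro i hi j hj hij
    have hi' : i ≠ c r := Finset.ne_of_mem_erase hi
    have hj' : j ≠ c r := Finset.ne_of_mem_erase hj
    rcases Sym2.eq_iff.mp hij with ⟨h1, _⟩ | ⟨h1, h2⟩
    · rw [← hcu (hv i), h1, hcu (hv j)]
    · have d1 := (hu i hi').2
      have d2 := (hu j hj').2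
      rw [h1] at d1; rw [← h2] at d2; omega
  -- indices
  set idx : Fin (k + 1) → ℕ := fun i => E.idxOf (ed i) with hidx
  have hidxlt : ∀ i ∈ A, idx i < E.length :=
    fun i hi => List.idxOf_lt_length_iff.mpr (hmemE i (Finset.ne_of_mem_erase hi))
  have hgetidx : ∀ i, ∀ hi : i ∈ A, E[idx i]'(hidxlt i hi) = ed i :=
    fun i hi => List.getElem_idxOf (hidxlt i hi)
  set I : Finset ℕ := A.image idx with hI
  have hIcard : I.card = k := by
    rw [hI, Finset.card_image_of_injOn, hAcard]
    intro i hi j hj hij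
    apply hedinj i hi j hj
    rw [← hgetidx i hi, ← hgetidx j hj]
    simp only [hij]
  obtain ⟨m, hmI, hmk⟩ : ∃ m ∈ I, k - 1 ≤ m := by
    by_contra hcon
    push_neg at hcon
    have : I ⊆ Finset.range (k - 1) := fun m hm => Finset.mem_range.mpr (hcon m hm)
    have := Finset.card_le_card this
    rw [hIcard, Finset.card_range] at this
    omega
  obtain ⟨i, hiA, him⟩ := Finset.mem_image.mp hmI
  have hi' : i ≠ c r := Finset.ne_of_mem_erase hiA
  have hmlt : m < E.length := him ▸ hidxlt i hiA
  -- now the sortedness argument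
  have hklen : k - 1 < (E.map edgeLen).length := by simp; omega
  have hmlen : m < (E.map edgeLen).length := by simpa using hmlt
  have hsort : (E.map edgeLen).get ⟨k - 1, hklen⟩ ≥ (E.map edgeLen).get ⟨m, hmlen⟩ :=
    hsorted.rel_get_of_le (by exact hmk)
  have hgetm : (E.map edgeLen).get ⟨m, hmlen⟩ = edgeLen (ed i) := by
    subst him
    rw [List.get_eq_getElem, List.getElem_map, hgetidx i hiA]
  have hfinal : alphaD P ≤ (E.map edgeLen).get ⟨k - 1, hklen⟩ := by
    calc alphaD P ≤ edgeLen (ed i) := halpha i hi'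
    _ = (E.map edgeLen).get ⟨m, hmlen⟩ := hgetm.symm
    _ ≤ (E.map edgeLen).get ⟨k - 1, hklen⟩ := hsort
  rw [edgeLenAt_pos_eq E hk1]
  rw [List.getD_eq_getElem _ _ (by simpa using hklen)]
  simpa using hfinal
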